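/- Let V ⊂ F^{n+1} be a subspace with 1 ≤ dim V ≤ n. The map h([w],t) = [(1−t)·w + t·p_V(w)] is a well-defined homotopy on FP^n ∖ P(V^⊥) from the identity to the composition of the projection P_V([w]) = [p_V(w)] with the inclusion of P(V); hence P(V) is a deformation retract of FP^n ∖ P(V^⊥). -/

import Mathlib

open scoped InnerProductSpace unitInterval

/-- The projective equivalence relation on nonzero vectors: `u ∼ v` iff `u = a • v`
for some scalar `a` (necessarily nonzero). -/
def projSetoid (𝕜 : Type) [Field 𝕜] (E : Type) [AddCommGroup E] [Module 𝕜 E] :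
    Setoid {v : E // v ≠ 0} where
  r u v := ∃ a : 𝕜, (u : E) = a • (v : E)
  iseqv := by
    constructor
    · exact fun u => ⟨1, (one_smul 𝕜 (u : E)).symm⟩
    · rintro u v ⟨a, h⟩
      have ha : a ≠ 0 := by
        rintro rfl
        exact u.2 (by simpa using h)
      exact ⟨a⁻¹, by rw [h, smul_smul, inv_mul_cancel₀ ha, one_smul]⟩
    · rintro u v w ⟨a, h1⟩ ⟨b, h2⟩
      exact ⟨a * b, by rw [h1, h2, smul_smul]⟩

/-- Projective space `FP^n` as the quotient of `F^{n+1} ∖ {0}` by scalar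
multiplication, with the quotient topology. -/
def ProjSp (𝕜 : Type) [Field 𝕜] (E : Type) [AddCommGroup E] [Module 𝕜 E] : Type :=
  Quotient (projSetoid 𝕜 E)

instance {𝕜 : Type} [Field 𝕜] {E : Type} [AddCommGroup E] [Module 𝕜 E]
    [TopologicalSpace E] : TopologicalSpace (ProjSp 𝕜 E) :=
  instTopologicalSpaceQuotient

/-- The projectivization `P(V)` of a subspace `V`, as a subset of projective space. -/
def projSubset (𝕜 : Type) [Field 𝕜] {E : Type} [AddCommGroup E] [Module 𝕜 E]
    (V : Submodule 𝕜 E) : Set (ProjSp 𝕜 E) :=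
  {x | ∃ (w : E) (hw : w ≠ 0), w ∈ V ∧ x = Quotient.mk (projSetoid 𝕜 E) ⟨w, hw⟩}

section Aux

variable {𝕜 : Type} [RCLike 𝕜] {n : ℕ}

/-- `[w] ∈ P(U)` iff `w ∈ U`. -/
lemma mem_projSubset_iff {E : Type} [AddCommGroup E] [Module 𝕜 E] (U : Submodule 𝕜 E)
    (w : E) (hw : w ≠ 0) :
    Quotient.mk (projSetoid 𝕜 E) ⟨w, hw⟩ ∈ projSubset 𝕜 U ↔ w ∈ U := by
  constructor
  · rintro ⟨u, hu, huU, hq⟩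
    obtain ⟨a, ha⟩ := Quotient.exact hq
    simp only at ha
    rw [ha]
    exact U.smul_mem a huU
  · intro h
    exact ⟨w, hw, h, rfl⟩

variable (V : Submodule 𝕜 (EuclideanSpace 𝕜 (Fin (n + 1))))

/-- The straight-line path `(1-t)w + t·p_V(w)`. -/
noncomputable def gmV (w : EuclideanSpace 𝕜 (Fin (n + 1))) (t : ℝ) :
    EuclideanSpace 𝕜 (Fin (n + 1)) :=
  (1 - t) • w + t • (V.orthogonalProjectionOnto w : EuclideanSpace 𝕜 (Fin (n + 1)))

lemma gmV_proj (w : EuclideanSpace 𝕜 (Fin (n + 1))) (t : ℝ) :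
    V.orthogonalProjectionOnto (gmV V w t) = V.orthogonalProjectionOnto w := by
  rw [gmV, RCLike.real_smul_eq_coe_smul (K := 𝕜), RCLike.real_smul_eq_coe_smul (K := 𝕜),
    map_add, map_smul, map_smul, Submodule.orthogonalProjectionOnto_mem_subspace_eq_self, ← add_smul,
    ← RCLike.ofReal_add, sub_add_cancel, RCLike.ofReal_one, one_smul]

lemma gmV_zero_mem (w : EuclideanSpace 𝕜 (Fin (n + 1))) (t : ℝ) (h : gmV V w t = 0) :
    w ∈ Vᗮ := by
  have := gmV_proj V w t
  rw [h, map_zero] at this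
  exact Submodule.orthogonalProjectionOnto_eq_zero_iff.mp this.symm

lemma gmV_ne_zero {w : EuclideanSpace 𝕜 (Fin (n + 1))} (hw : w ∉ Vᗮ) (t : ℝ) :
    gmV V w t ≠ 0 :=
  fun h => hw (gmV_zero_mem V w t h)

lemma gmV_not_mem {w : EuclideanSpace 𝕜 (Fin (n + 1))} (hw : w ∉ Vᗮ) (t : ℝ) :
    gmV V w t ∉ Vᗮ := by
  intro hmem
  apply hw
  rw [← Submodule.orthogonalProjectionOnto_eq_zero_iff, ← gmV_proj V w t,
    Submodule.orthogonalProjectionOnto_eq_zero_iff]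
  exact hmem

lemma gmV_smul (a : 𝕜) (w : EuclideanSpace 𝕜 (Fin (n + 1))) (t : ℝ) :
    gmV V (a • w) t = a • gmV V w t := by
  simp only [gmV, RCLike.real_smul_eq_coe_smul (K := 𝕜), map_smul, Submodule.coe_smul,
    smul_add, smul_smul]
  rw [mul_comm a, mul_comm a]

lemma gmV_mem {w : EuclideanSpace 𝕜 (Fin (n + 1))} (hw : w ∈ V) (t : ℝ) :
    gmV V w t = w := by
  rw [gmV, ← Submodule.starProjection_apply, Submodule.starProjection_eq_self_iff.mpr hw, ← add_smul, sub_add_cancel, one_smul]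

lemma gmV_zero (w : EuclideanSpace 𝕜 (Fin (n + 1))) : gmV V w 0 = w := by
  simp [gmV]

lemma gmV_one (w : EuclideanSpace 𝕜 (Fin (n + 1))) :
    gmV V w 1 = (V.orthogonalProjectionOnto w : EuclideanSpace 𝕜 (Fin (n + 1))) := by
  simp [gmV]

/-- The core map into the subtype of projective space. -/
noncomputable def HcoreV (v : {v : EuclideanSpace 𝕜 (Fin (n + 1)) // v ≠ 0})
    (hv : (v : EuclideanSpace 𝕜 (Fin (n + 1))) ∉ Vᗮ) (t : ℝ) :
    {x : ProjSp 𝕜 (EuclideanSpace 𝕜 (Fin (n + 1))) // x ∉ projSubset 𝕜 Vᗮ} :=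
  ⟨Quotient.mk (projSetoid 𝕜 _) ⟨gmV V v.1 t, gmV_ne_zero V hv t⟩, by
    intro h
    exact gmV_not_mem V hv t ((mem_projSubset_iff Vᗮ _ _).mp h)⟩

lemma HcoreV_congr {v w : {v : EuclideanSpace 𝕜 (Fin (n + 1)) // v ≠ 0}}
    (h : Quotient.mk (projSetoid 𝕜 _) v = Quotient.mk (projSetoid 𝕜 _) w)
    (hv : (v : EuclideanSpace 𝕜 (Fin (n + 1))) ∉ Vᗮ)
    (hw : (w : EuclideanSpace 𝕜 (Fin (n + 1))) ∉ Vᗮ) (t : ℝ) :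
    HcoreV V v hv t = HcoreV V w hw t := by
  obtain ⟨a, ha⟩ := Quotient.exact h
  refine Subtype.ext (Quotient.sound ⟨a, ?_⟩)
  show gmV V v.1 t = a • gmV V w.1 t
  rw [show v.1 = a • w.1 from ha, gmV_smul]

lemma not_mem_of_mk_not_mem {v : {v : EuclideanSpace 𝕜 (Fin (n + 1)) // v ≠ 0}}
    (h : Quotient.mk (projSetoid 𝕜 _) v ∉ projSubset 𝕜 Vᗮ) :
    (v : EuclideanSpace 𝕜 (Fin (n + 1))) ∉ Vᗮ := by
  intro hmem
  exact h ((mem_projSubset_iff Vᗮ v.1 v.2).mpr hmem)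

/-- The main homotopy map. -/
noncomputable def HmapV
    (z : {x : ProjSp 𝕜 (EuclideanSpace 𝕜 (Fin (n + 1))) // x ∉ projSubset 𝕜 Vᗮ} × I) :
    {x : ProjSp 𝕜 (EuclideanSpace 𝕜 (Fin (n + 1))) // x ∉ projSubset 𝕜 Vᗮ} :=
  HcoreV V (Quotient.out z.1.1)
    (not_mem_of_mk_not_mem V (by intro h; apply z.1.2; exact Quotient.out_eq z.1.1 ▸ h)) z.2

lemma HmapV_eq (v : {v : EuclideanSpace 𝕜 (Fin (n + 1)) // v ≠ 0})
    (hv : Quotient.mk (projSetoid 𝕜 _) v ∉ projSubset 𝕜 Vᗮ) (t : I) :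
    HmapV V (⟨Quotient.mk (projSetoid 𝕜 _) v, hv⟩, t) =
      HcoreV V v (not_mem_of_mk_not_mem V hv) t :=
  HcoreV_congr V (Quotient.out_eq _) _ _ _

/-- `Quotient.mk` is an open map for the projective relation. -/
lemma isOpenMap_projMk : IsOpenMap
    (Quotient.mk (projSetoid 𝕜 (EuclideanSpace 𝕜 (Fin (n + 1))))) := by
  set E := EuclideanSpace 𝕜 (Fin (n + 1))
  intro U hU
  rw [isOpen_coinduced (f := Quotient.mk (projSetoid 𝕜 E))]
  have key : Quotient.mk (projSetoid 𝕜 E) ⁻¹' (Quotient.mk (projSetoid 𝕜 E) '' U) =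
      ⋃ a : 𝕜ˣ, (fun v : {v : E // v ≠ 0} =>
        (⟨(a : 𝕜) • v.1, smul_ne_zero a.ne_zero v.2⟩ : {v : E // v ≠ 0})) ⁻¹' U := by
    ext v
    simp only [Set.mem_preimage, Set.mem_image, Set.mem_iUnion]
    constructor
    · rintro ⟨u, hu, hq⟩
      obtain ⟨a, ha⟩ := Quotient.exact hq
      have ha0 : a ≠ 0 := by
        rintro rfl
        exact u.2 (by simpa using ha)
      exact ⟨Units.mk0 a ha0, Set.mem_of_eq_of_mem (Subtype.ext ha.symm) hu⟩
    · rintro ⟨a, ha⟩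
      exact ⟨_, ha, Quotient.sound ⟨(a : 𝕜), rfl⟩⟩
  rw [key]
  exact isOpen_iUnion fun a =>
    hU.preimage (((continuous_const_smul ((a : 𝕜))).comp continuous_subtype_val).subtype_mk _)

lemma continuous_HmapV : Continuous (HmapV V) := by
  set E := EuclideanSpace 𝕜 (Fin (n + 1))
  set T : Set (ProjSp 𝕜 E) := {x | x ∉ projSubset 𝕜 Vᗮ} with hT
  have hsurj : Function.Surjective (Quotient.mk (projSetoid 𝕜 E)) :=
    fun x => ⟨Quotient.out x, Quotient.out_eq x⟩
  have hcont : Continuous (Quotient.mk (projSetoid 𝕜 E)) := continuous_quotient_mk'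
  have hqm : Topology.IsQuotientMap
      (Prod.map (T.restrictPreimage (Quotient.mk (projSetoid 𝕜 E))) (id : I → I)) := by
    refine IsOpenMap.isQuotientMap ?_ ?_ ?_
    · exact ((isOpenMap_projMk).restrictPreimage T).prodMap IsOpenMap.id
    · exact (hcont.restrictPreimage).prodMap continuous_id
    · exact (T.restrictPreimage_surjective hsurj).prodMap Function.surjective_id
  rw [hqm.continuous_iff]
  have heq : (HmapV V) ∘
      (Prod.map (T.restrictPreimage (Quotient.mk (projSetoid 𝕜 E))) (id : I → I)) =
      fun z : ↥(Quotient.mk (projSetoid 𝕜 E) ⁻¹' T) × I =>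
        HcoreV V z.1.1 (not_mem_of_mk_not_mem V z.1.2) z.2 := by
    funext z
    exact HmapV_eq V z.1.1 z.1.2 z.2
  rw [heq]
  have hg : Continuous fun z : ↥(Quotient.mk (projSetoid 𝕜 E) ⁻¹' T) × I =>
      gmV V z.1.1.1 (z.2 : ℝ) := by
    apply Continuous.add
    · exact (continuous_const.sub (continuous_subtype_val.comp continuous_snd)).smul
        (continuous_subtype_val.comp (continuous_subtype_val.comp continuous_fst))
    · exact (continuous_subtype_val.comp continuous_snd).smul
        (continuous_subtype_val.comp (V.orthogonalProjectionOnto.continuous.comp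
          (continuous_subtype_val.comp (continuous_subtype_val.comp continuous_fst))))
  exact ((hcont.comp (hg.subtype_mk _)).subtype_mk _)

end Aux

/-- Let `V ⊆ F^{n+1}` with `1 ≤ dim V ≤ n`.  The map `h([w],t) = [(1−t)w + t·p_V(w)]`
is a well-defined homotopy on `FP^n ∖ P(V^⊥)` from the identity to the projection
`P_V([w]) = [p_V(w)]` into `P(V)` (in particular `(1−t)w + t·p_V(w) = 0` forces
`w ∈ V^⊥`); it fixes `P(V)` pointwise, so `P(V)` is a deformation retract of
`FP^n ∖ P(V^⊥)`. -/
theorem stmt_2 {𝕜 : Type} [RCLike 𝕜] {n : ℕ}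
    (V : Submodule 𝕜 (EuclideanSpace 𝕜 (Fin (n + 1))))
    (hV1 : 1 ≤ Module.finrank 𝕜 V) (hV2 : Module.finrank 𝕜 V ≤ n) :
    (∀ (w : EuclideanSpace 𝕜 (Fin (n + 1))) (t : ℝ), t ∈ Set.Icc (0 : ℝ) 1 →
      (1 - t) • w + t • (V.orthogonalProjectionOnto w : EuclideanSpace 𝕜 (Fin (n + 1))) = 0 →
        w ∈ Vᗮ) ∧
    ∃ H : C(({x : ProjSp 𝕜 (EuclideanSpace 𝕜 (Fin (n + 1))) // x ∉ projSubset 𝕜 Vᗮ} × I),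
          {x : ProjSp 𝕜 (EuclideanSpace 𝕜 (Fin (n + 1))) // x ∉ projSubset 𝕜 Vᗮ}),
      (∀ x, H (x, 0) = x) ∧
      (∀ x, (H (x, 1)).1 ∈ projSubset 𝕜 V) ∧
      (∀ x t, x.1 ∈ projSubset 𝕜 V → H (x, t) = x) ∧
      ∀ (w : EuclideanSpace 𝕜 (Fin (n + 1))) (hw : w ≠ 0)
        (hmem : Quotient.mk (projSetoid 𝕜 _) ⟨w, hw⟩ ∉ projSubset 𝕜 Vᗮ) (t : I),
        ∃ hz : (1 - (t : ℝ)) • w +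
            (t : ℝ) • (V.orthogonalProjectionOnto w : EuclideanSpace 𝕜 (Fin (n + 1))) ≠ 0,
          (H (⟨Quotient.mk (projSetoid 𝕜 _) ⟨w, hw⟩, hmem⟩, t)).1 =
            Quotient.mk (projSetoid 𝕜 _)
              ⟨(1 - (t : ℝ)) • w +
                (t : ℝ) • (V.orthogonalProjectionOnto w : EuclideanSpace 𝕜 (Fin (n + 1))), hz⟩ := by
  constructor
  · exact fun w t _ h => gmV_zero_mem V w t h
  · refine ⟨⟨HmapV V, continuous_HmapV V⟩, ?_, ?_, ?_, ?_⟩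
    · -- H (x, 0) = x
      intro x
      show HmapV V (x, 0) = x
      refine Subtype.ext ?_
      show Quotient.mk (projSetoid 𝕜 _) _ = x.1
      calc Quotient.mk (projSetoid 𝕜 _)
            (⟨gmV V (Quotient.out x.1).1 ((0 : I) : ℝ), _⟩ :
              {v : EuclideanSpace 𝕜 (Fin (n + 1)) // v ≠ 0})
          = Quotient.mk (projSetoid 𝕜 _) (Quotient.out x.1) :=
            Quotient.sound ⟨1, by
              show gmV V (Quotient.out x.1).1 ((0 : I) : ℝ) = (1 : 𝕜) • _
              rw [Set.Icc.coe_zero, gmV_zero, one_smul]⟩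
        _ = @id (Quotient (projSetoid 𝕜 (EuclideanSpace 𝕜 (Fin (n + 1))))) x.1 := Quotient.out_eq _
    · -- H (x, 1) lands in P(V)
      intro x
      have hv : (Quotient.out x.1).1 ∉ Vᗮ :=
        not_mem_of_mk_not_mem V (by intro h; apply x.2; exact Quotient.out_eq x.1 ▸ h)
      show (HcoreV V (Quotient.out x.1) hv ((1 : I) : ℝ)).1 ∈ projSubset 𝕜 V
      refine ⟨gmV V (Quotient.out x.1).1 ((1 : I) : ℝ), gmV_ne_zero V hv _, ?_, rfl⟩
      rw [Set.Icc.coe_one, gmV_one]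
      exact (V.orthogonalProjectionOnto (Quotient.out x.1).1).2
    · -- fixes P(V)
      intro x t hx
      show HmapV V (x, t) = x
      have hout : (Quotient.out x.1).1 ∈ V := by
        obtain ⟨w, hw, hwV, hq⟩ := hx
        obtain ⟨a, ha⟩ := Quotient.exact ((Quotient.out_eq x.1).trans hq)
        rw [show (Quotient.out x.1).1 = a • w from ha]
        exact V.smul_mem a hwV
      refine Subtype.ext ?_
      show Quotient.mk (projSetoid 𝕜 _) _ = x.1
      calc Quotient.mk (projSetoid 𝕜 _)
            (⟨gmV V (Quotient.out x.1).1 ((t : I) : ℝ), _⟩ :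
              {v : EuclideanSpace 𝕜 (Fin (n + 1)) // v ≠ 0})
          = Quotient.mk (projSetoid 𝕜 _) (Quotient.out x.1) :=
            Quotient.sound ⟨1, by
              show gmV V (Quotient.out x.1).1 ((t : I) : ℝ) = (1 : 𝕜) • _
              rw [gmV_mem V hout, one_smul]⟩
        _ = @id (Quotient (projSetoid 𝕜 (EuclideanSpace 𝕜 (Fin (n + 1))))) x.1 := Quotient.out_eq _
    · -- formula
      intro w hw hmem t
      refine ⟨gmV_ne_zero V (not_mem_of_mk_not_mem V hmem) (t : ℝ), ?_⟩
      have := HmapV_eq V ⟨w, hw⟩ hmem t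
      show (HmapV V (⟨Quotient.mk (projSetoid 𝕜 _) ⟨w, hw⟩, hmem⟩, t)).1 = _
      rw [this]
      rfl
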